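/- Let D be a finite-dimensional central division algebra over a field F with dim_F D = p^4 (degree p²), p prime, and let v ∈ D be a nonzero element. If there exists an invertible t ∈ D and a central primitive p-th root of unity ρ such that v·t = ρ·t·v, and F[v] is not of dimension p over F, then the subfield F[v^p] satisfies [F[v^p] : F] = p. -/

import Mathlib

open Polynomial

section Aux

variable {F : Type*} [Field F] {D : Type*} [Ring D] [IsDomain D] [Algebra F D]

omit [IsDomain D] in
theorem aux_linearIndependent_pow (x : D) :
    LinearIndependent F fun i : Fin (minpoly F x).natDegree => x ^ (i : ℕ) := by
  by_cases h : IsIntegral F x; swap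
  · rw [minpoly.eq_zero h, natDegree_zero]
    exact linearIndependent_empty_type
  refine Fintype.linearIndependent_iff.2 fun g hg i => ?_
  simp_rw [Algebra.smul_def, ← aeval_monomial, ← map_sum] at hg
  apply (fun hn0 => (minpoly.degree_le_of_ne_zero F x (mt (fun h0 => ?_) hn0) hg).not_gt).mtr
  · simp_rw [← C_mul_X_pow_eq_monomial]
    exact (degree_eq_natDegree <| minpoly.ne_zero h).symm ▸ degree_sum_fin_lt _
  · apply_fun lcoeff F i at h0
    simp_rw [map_sum, lcoeff_apply, coeff_monomial, Fin.val_eq_val, Finset.sum_ite_eq'] at h0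
    exact (if_pos <| Finset.mem_univ _).symm.trans h0

theorem aux_finrank_adjoin (x : D) (hx : IsIntegral F x) :
    Module.finrank F (Algebra.adjoin F {x}) = (minpoly F x).natDegree := by
  set d := (minpoly F x).natDegree with hd
  set A := Algebra.adjoin F ({x} : Set D) with hA
  have hxA : x ∈ A := Algebra.self_mem_adjoin_singleton F x
  set b : Fin d → A := fun i => (⟨x, hxA⟩ : A) ^ (i : ℕ) with hb
  have hcoe : ∀ i : Fin d, ((b i : A) : D) = x ^ (i : ℕ) := fun i => by
    simp [hb]
  have hli : LinearIndependent F b := by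
    apply LinearIndependent.of_comp (A.val.toLinearMap)
    have := aux_linearIndependent_pow (F := F) x
    convert this using 2
    · exact hcoe _
    · rfl
  have hspan : ⊤ ≤ Submodule.span F (Set.range b) := by
    rintro ⟨y, hy⟩ -
    have hy' := hy
    rw [hA, Algebra.adjoin_singleton_eq_range_aeval, AlgHom.mem_range] at hy'
    obtain ⟨f, hf⟩ := hy'
    have hmonic := minpoly.monic hx
    set r := f %ₘ minpoly F x with hr
    have hy2 : aeval x f = aeval x r := by
      conv_lhs => rw [← modByMonic_add_div f (minpoly F x)]
      simp [hr]
    have hd0 : 0 < d := minpoly.natDegree_pos hx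
    have hdeg : r.natDegree < d := by
      by_cases h0 : r = 0
      · simpa [h0]
      · exact natDegree_lt_natDegree h0 (degree_modByMonic_lt f hmonic)
    have hsum : aeval x r = ∑ i ∈ Finset.range d, r.coeff i • x ^ i :=
      aeval_eq_sum_range' hdeg x
    have key : (⟨y, hy⟩ : A) = ∑ i : Fin d, r.coeff (i : ℕ) • b i := by
      apply Subtype.ext
      have hcs : ((∑ i : Fin d, r.coeff (i : ℕ) • b i : A) : D)
          = ∑ i : Fin d, r.coeff (i : ℕ) • x ^ (i : ℕ) := by
        simp [hcoe]
      rw [hcs]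
      show y = _
      rw [← hf, hy2, hsum, ← Fin.sum_univ_eq_sum_range]
    rw [key]
    exact Submodule.sum_mem _ fun i _ =>
      Submodule.smul_mem _ _ (Submodule.subset_span ⟨i, rfl⟩)
  rw [Module.finrank_eq_card_basis (Module.Basis.mk hli hspan), Fintype.card_fin]

end Aux

section Aux2

variable {F : Type*} [Field F] {D : Type*} [DivisionRing D] [Algebra F D]

theorem aux_finrank_dvd [FiniteDimensional F D] (S : Subalgebra F D) :
    Module.finrank F S ∣ Module.finrank F D := by
  haveI : IsDomain S :=
    Function.Injective.isDomain (S.toSubring.subtype) Subtype.coe_injective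
  letI : DivisionRing S := divisionRingOfFiniteDimensional F S
  letI : Module S D := Module.compHom D (S.val.toRingHom : S →+* D)
  have hsmul : ∀ (s : S) (x : D), s • x = (s : D) * x := fun s x => rfl
  haveI : IsScalarTower F S D := by
    constructor
    intro f s x
    rw [hsmul, hsmul]
    push_cast
    rw [Algebra.smul_def, Algebra.smul_def, mul_assoc]
  exact ⟨Module.finrank S D, (@Module.finrank_mul_finrank F S D _ _ _ _ _ _ this _ _ _ _).symm⟩

theorem aux_eq_top [FiniteDimensional F D] (S : Subalgebra F D)
    (h : Module.finrank F S = Module.finrank F D) : S = ⊤ := by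
  have h2 : Subalgebra.toSubmodule S = ⊤ := by
    apply Submodule.eq_top_of_finrank_eq
    rw [← h]
    rfl
  rwa [Algebra.toSubmodule_eq_top] at h2

end Aux2


theorem finrank_adjoin_pow_p {F : Type*} [Field F] {D : Type*} [DivisionRing D]
    [Algebra F D] (hcentral : Subring.center D = (algebraMap F D).range)
    (p : ℕ) (hp : p.Prime) (hdim : Module.finrank F D = p ^ 4)
    (v : D) (hv : v ≠ 0)
    (h : ∃ (t : D) (ρ : F), IsUnit t ∧ ρ ^ p = 1 ∧ ρ ≠ 1 ∧ v * t = ρ • (t * v))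
    (hFv : Module.finrank F (Algebra.adjoin F {v}) ≠ p) :
    Module.finrank F (Algebra.adjoin F {v ^ p}) = p := by
  obtain ⟨t, ρ, ht, hρp, hρ1, hvt⟩ := h
  haveI : FiniteDimensional F D := Module.finite_of_finrank_pos (by rw [hdim]; exact pow_pos hp.pos 4)
  have ht0 : t ≠ 0 := ht.ne_zero
  have hρ0 : ρ ≠ 0 := by rintro rfl; rw [zero_pow hp.ne_zero] at hρp; exact one_ne_zero hρp.symm
  have htv0 : t * v ≠ 0 := mul_ne_zero ht0 hv
  have hvint : IsIntegral F v := IsIntegral.of_finite F v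
  have hvpint : IsIntegral F (v ^ p) := IsIntegral.of_finite F (v ^ p)
  haveI : Fact (Nat.Prime p) := Fact.mk hp
  haveI : NoZeroSMulDivisors F D :=
    inferInstance
  have hne : v * t ≠ t * v := by
    intro hEq
    rw [hvt] at hEq
    have h0 : (ρ - 1) • (t * v) = 0 := by rw [sub_smul, one_smul, hEq, sub_self]
    rcases smul_eq_zero.mp h0 with h1 | h2
    · exact hρ1 (by rwa [sub_eq_zero] at h1)
    · exact htv0 h2
  have hadjle : Algebra.adjoin F ({v} : Set D) ≤ Subalgebra.centralizer F ({v} : Set D) := by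
    apply Algebra.adjoin_le
    rw [Set.singleton_subset_iff, SetLike.mem_coe, Subalgebra.mem_centralizer_iff]
    rintro g hg
    rw [Set.mem_singleton_iff] at hg; subst hg; rfl
  have htadj : t ∉ Algebra.adjoin F ({v} : Set D) := by
    intro htmem
    exact hne ((Subalgebra.mem_centralizer_iff F).mp (hadjle htmem) v (Set.mem_singleton v))
  -- the conjugation algebra homomorphism
  let σ : D →ₐ[F] D :=
    { toFun := fun x => t⁻¹ * x * t
      map_one' := by show t⁻¹ * 1 * t = 1; rw [mul_one, inv_mul_cancel₀ ht0]
      map_mul' := fun x y => by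
        simp only [mul_assoc]
        rw [mul_inv_cancel_left₀ ht0]
      map_zero' := by show t⁻¹ * 0 * t = 0; rw [mul_zero, zero_mul]
      map_add' := fun x y => by
        show t⁻¹ * (x + y) * t = t⁻¹ * x * t + t⁻¹ * y * t
        rw [mul_add, add_mul]
      commutes' := fun r => by
        show t⁻¹ * algebraMap F D r * t = algebraMap F D r
        rw [mul_assoc, Algebra.commutes r t, inv_mul_cancel_left₀ ht0] }
  have hσv : σ v = ρ • v := by
    show t⁻¹ * v * t = ρ • v
    rw [mul_assoc, hvt, mul_smul_comm, ← mul_assoc, inv_mul_cancel₀ ht0, one_mul]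
  set m := minpoly F v with hm
  set d := m.natDegree with hd
  have hroot : aeval (ρ • v) m = 0 := by
    rw [← hσv, aeval_algHom_apply, minpoly.aeval, map_zero]
  have hroot2 : aeval (algebraMap F D ρ⁻¹ * (ρ • v)) (m.scaleRoots ρ⁻¹) = 0 :=
    scaleRoots_aeval_eq_zero hroot
  have hsimp : algebraMap F D ρ⁻¹ * (ρ • v) = v := by
    rw [mul_smul_comm, ← Algebra.smul_def, smul_smul, mul_inv_cancel₀ hρ0, one_smul]
  have hscale : m.scaleRoots ρ⁻¹ = m := by
    apply minpoly.unique
    · exact (monic_scaleRoots_iff _).mpr (minpoly.monic hvint)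
    · rwa [hsimp] at hroot2
    · intro q hq hq0
      rw [degree_scaleRoots]
      exact minpoly.min F v hq hq0
  have hordp : orderOf ρ = p := orderOf_eq_prime hρp hρ1
  have pdvd : ∀ i, i ≤ d → m.coeff i ≠ 0 → p ∣ (d - i) := by
    intro i _ h0
    have hc := congrArg (fun q : F[X] => q.coeff i) hscale
    simp only [coeff_scaleRoots] at hc
    have h1 : ρ⁻¹ ^ (d - i) = 1 := by
      rcases mul_right_eq_self₀.mp hc with h1 | h1
      · exact h1
      · exact absurd h1 h0
    rw [inv_pow, inv_eq_one] at h1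
    have h2 := orderOf_dvd_of_pow_eq_one h1
    rwa [hordp] at h2
  have hpd : p ∣ d := by
    simpa using pdvd 0 (Nat.zero_le d) (minpoly.coeff_zero_ne_zero hvint hv)
  have key : ∀ i, ¬ p ∣ i → m.coeff i = 0 := by
    intro i hi
    by_contra h0
    rcases le_or_gt i d with hle | hlt
    · have h1 := pdvd i hle h0
      have h2 : p ∣ i := by
        have h3 := Nat.dvd_sub hpd h1
        rwa [Nat.sub_sub_self hle] at h3
      exact hi h2
    · exact h0 (coeff_eq_zero_of_natDegree_lt hlt)
  set g := contract p m with hg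
  have hexp : expand F p g = m := by
    ext n
    rw [coeff_expand hp.pos, hg, coeff_contract hp.ne_zero]
    split_ifs with hn
    · rw [Nat.div_mul_cancel hn]
    · exact (key n hn).symm
  have hdg : d = g.natDegree * p := by rw [hd, ← hexp, natDegree_expand]
  set e := (minpoly F (v ^ p)).natDegree with he
  have hg0 : g ≠ 0 := by
    intro h0
    apply minpoly.ne_zero hvint
    rw [← hm, ← hexp, h0, map_zero]
  have hgroot : aeval (v ^ p) g = 0 := by
    rw [← expand_aeval p g v, hexp, hm]
    exact minpoly.aeval F v
  have h_e_le : e ≤ g.natDegree :=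
    natDegree_le_natDegree (minpoly.degree_le_of_ne_zero F (v ^ p) hg0 hgroot)
  have h_d_le : d ≤ e * p := by
    have h1 : aeval v (expand F p (minpoly F (v ^ p))) = 0 := by
      rw [expand_aeval]
      exact minpoly.aeval F (v ^ p)
    have h2 : expand F p (minpoly F (v ^ p)) ≠ 0 := by
      rw [Ne, Polynomial.expand_eq_zero hp.pos]
      exact minpoly.ne_zero hvpint
    have h3 := natDegree_le_natDegree (minpoly.degree_le_of_ne_zero F v h2 h1)
    rwa [natDegree_expand] at h3
  have hde : d = e * p :=
    le_antisymm h_d_le (by rw [hdg]; exact Nat.mul_le_mul_right p h_e_le)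
  have hfr_v : Module.finrank F (Algebra.adjoin F ({v} : Set D)) = d :=
    aux_finrank_adjoin v hvint
  have hfr_vp : Module.finrank F (Algebra.adjoin F ({v ^ p} : Set D)) = e :=
    aux_finrank_adjoin (v ^ p) hvpint
  have hdvd : d ∣ p ^ 4 := by
    rw [← hdim, ← hfr_v]
    exact aux_finrank_dvd _
  obtain ⟨k, hk4, hkd⟩ := (Nat.dvd_prime_pow hp).mp hdvd
  have hpowcomm : ∀ n : ℕ, v ^ n * t = ρ ^ n • (t * v ^ n) := by
    intro n
    induction n with
    | zero => simp
    | succ n ih =>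
      rw [pow_succ, mul_assoc, hvt, mul_smul_comm, ← mul_assoc, ih, smul_mul_assoc, smul_smul,
        mul_assoc, ← pow_succ']
  have htc : t ∈ Subalgebra.centralizer F ({v ^ p} : Set D) := by
    rw [Subalgebra.mem_centralizer_iff]
    rintro g hg
    rw [Set.mem_singleton_iff] at hg; subst hg
    rw [hpowcomm p, hρp, one_smul]
  interval_cases k
  · -- k = 0 : d = 1, but p ∣ d
    exfalso
    rw [pow_zero] at hkd
    have h1 := Nat.le_of_dvd one_pos (hkd ▸ hpd)
    have h2 := hp.two_le
    omega
  · -- k = 1 : d = p, contradicts hFv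
    exfalso
    rw [pow_one] at hkd
    exact hFv (hfr_v.trans hkd)
  · -- k = 2 : conclude
    rw [hfr_vp]
    have h1 : e * p = p * p := by rw [← hde, hkd]; ring
    exact Nat.eq_of_mul_eq_mul_right hp.pos (by rw [h1])
  · -- k = 3 : centralizer contradiction
    exfalso
    have he2 : e = p ^ 2 := by
      have h1 : e * p = p ^ 2 * p := by rw [← hde, hkd]; ring
      exact Nat.eq_of_mul_eq_mul_right hp.pos h1
    set S' := Subalgebra.centralizer F ({v ^ p} : Set D) with hS'
    have hL : Algebra.adjoin F ({v} : Set D) ≤ S' := by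
      apply Algebra.adjoin_le
      rw [Set.singleton_subset_iff, SetLike.mem_coe, Subalgebra.mem_centralizer_iff]
      rintro g hg
      rw [Set.mem_singleton_iff] at hg; subst hg
      exact ((Commute.refl v).pow_left p).eq
    have hlt : Algebra.adjoin F ({v} : Set D) < S' :=
      lt_of_le_of_ne hL (fun hEq => htadj (hEq ▸ htc))
    have hfrS : p ^ 3 < Module.finrank F S' := by
      rw [← hkd, ← hfr_v]
      exact Submodule.finrank_lt_finrank_of_lt
        (show Subalgebra.toSubmodule (Algebra.adjoin F ({v} : Set D)) < Subalgebra.toSubmodule S'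
          from Subalgebra.toSubmodule.lt_iff_lt.mpr hlt)
    have hdvdS : Module.finrank F S' ∣ p ^ 4 := by
      rw [← hdim]
      exact aux_finrank_dvd _
    obtain ⟨k', hk'4, hk'⟩ := (Nat.dvd_prime_pow hp).mp hdvdS
    have hk'4' : k' = 4 := by
      by_contra hk'ne
      have hk'le : k' ≤ 3 := by omega
      have : Module.finrank F S' ≤ p ^ 3 := by
        rw [hk']
        exact Nat.pow_le_pow_right hp.pos hk'le
      omega
    have hS'top : S' = ⊤ := aux_eq_top _ (by rw [hk', hk'4', hdim])
    have hcent : v ^ p ∈ Subring.center D := by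
      rw [Subring.mem_center_iff]
      intro g
      have hgS : g ∈ S' := hS'top ▸ Algebra.mem_top
      exact ((Subalgebra.mem_centralizer_iff F).mp hgS (v ^ p) (Set.mem_singleton _)).symm
    rw [hcentral] at hcent
    obtain ⟨c, hc⟩ := hcent
    have he1 : e ≤ 1 := by
      have h1 : aeval (v ^ p) (X - C c : F[X]) = 0 := by
        rw [map_sub, aeval_X, aeval_C, hc, sub_self]
      have h2 : (X - C c : F[X]) ≠ 0 := X_sub_C_ne_zero c
      have h3 := natDegree_le_natDegree (minpoly.degree_le_of_ne_zero F (v ^ p) h2 h1)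
      rwa [natDegree_X_sub_C] at h3
    have := hp.two_le
    nlinarith [he2 ▸ he1]
  · -- k = 4 : D would be commutative
    exfalso
    have htop : Algebra.adjoin F ({v} : Set D) = ⊤ :=
      aux_eq_top _ (by rw [hfr_v, hkd, hdim])
    exact htadj (htop ▸ Algebra.mem_top)
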